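/- Let K = F[α] be a field extension of F generated by a single element α, let g be a Lie algebra over F with extension g_K = g ⊗_F K, and let R: g_K → gl(V) be an irreducible representation on a K-vector space V. If the scalar operator α·I lies in the associative F-subalgebra of End(V) generated by R(g), then V is irreducible as a g-module (over F). -/

import Mathlib

open scoped TensorProduct

attribute [local instance 100] LieRing.ofAssociativeRing

theorem irreducible_of_restriction_of_scalar_in_image_algebra
    (F K : Type) [Field F] [Field K] [Algebra F K]
    (α : K) (hgen : Algebra.adjoin F ({α} : Set K) = ⊤)
    (g : Type) [LieRing g] [LieAlgebra F g]
    (V : Type) [AddCommGroup V] [Module K V]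
    (R : (K ⊗[F] g) →ₗ⁅K⁆ Module.End K V)
    (hirr : ∀ U : Submodule K V, (∀ a : K ⊗[F] g, ∀ v ∈ U, R a v ∈ U) → U = ⊥ ∨ U = ⊤)
    -- condition (C): `α • I` lies in the associative `F`-subalgebra of `End V`
    -- generated by `R(g)` (the `F`-span of the multiplicative closure of `R(g)`)
    (hC : letI : Module F (Module.End K V) := Module.compHom _ (algebraMap F K)
      α • (1 : Module.End K V) ∈
        Submodule.span F
          ((Submonoid.closure (Set.range fun a : g => R ((1 : K) ⊗ₜ[F] a)) :
            Submonoid (Module.End K V)) : Set (Module.End K V))) :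
    ∀ U : AddSubgroup V,
      (∀ c : F, ∀ v ∈ U, algebraMap F K c • v ∈ U) →
      (∀ a : g, ∀ v ∈ U, R ((1 : K) ⊗ₜ[F] a) v ∈ U) →
      U = ⊥ ∨ U = ⊤ := by
  intro U hF hg
  letI : Module F (Module.End K V) := Module.compHom _ (algebraMap F K)
  -- every element of the span acts on U
  have hspan : ∀ f ∈ Submodule.span F
      ((Submonoid.closure (Set.range fun a : g => R ((1 : K) ⊗ₜ[F] a)) :
        Submonoid (Module.End K V)) : Set (Module.End K V)),
      ∀ v ∈ U, f v ∈ U := by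
    intro f hf
    induction hf using Submodule.span_induction with
    | mem f hf =>
      induction hf using Submonoid.closure_induction with
      | mem f hf =>
        obtain ⟨a, rfl⟩ := hf
        exact hg a
      | one => intro v hv; exact hv
      | mul x y _ _ hx hy =>
        intro v hv
        exact hx _ (hy v hv)
    | zero => intro v hv; simpa using U.zero_mem
    | add x y _ _ hx hy =>
      intro v hv
      simpa using U.add_mem (hx v hv) (hy v hv)
    | smul c x _ hx =>
      intro v hv
      have : (c • x) v = algebraMap F K c • x v := rfl
      rw [this]
      exact hF c _ (hx v hv)
  have hα : ∀ v ∈ U, α • v ∈ U := by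
    intro v hv
    have := hspan _ hC v hv
    simpa using this
  -- every K-scalar acts on U
  have hK : ∀ k : K, ∀ v ∈ U, k • v ∈ U := by
    intro k
    have hk : k ∈ Subalgebra.toSubmodule (Algebra.adjoin F ({α} : Set K)) := by
      rw [hgen]; trivial
    rw [Algebra.adjoin_eq_span] at hk
    induction hk using Submodule.span_induction with
    | mem x hx =>
      induction hx using Submonoid.closure_induction with
      | mem x hx =>
        rw [Set.mem_singleton_iff] at hx
        subst hx; exact hα
      | one => intro v hv; simpa using hv
      | mul x y _ _ hx hy =>
        intro v hv
        rw [mul_smul]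
        exact hx _ (hy v hv)
    | zero => intro v hv; simpa using U.zero_mem
    | add x y _ _ hx hy =>
      intro v hv
      rw [add_smul]
      exact U.add_mem (hx v hv) (hy v hv)
    | smul c x _ hx =>
      intro v hv
      rw [Algebra.smul_def, mul_smul]
      exact hF c _ (hx v hv)
  -- U is a K-submodule
  let U' : Submodule K V :=
    { carrier := (U : Set V)
      add_mem' := fun ha hb => U.add_mem ha hb
      zero_mem' := U.zero_mem
      smul_mem' := fun k v hv => hK k v hv }
  have hinv : ∀ a : K ⊗[F] g, ∀ v ∈ U', R a v ∈ U' := by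
    intro a
    induction a using TensorProduct.induction_on with
    | zero => intro v hv; simp
    | tmul k b =>
      intro v hv
      have hk : (k : K) ⊗ₜ[F] b = k • ((1 : K) ⊗ₜ[F] b) := by
        simp [TensorProduct.smul_tmul', smul_eq_mul]
      rw [hk, map_smul]
      exact hK k _ (hg b v hv)
    | add x y hx hy =>
      intro v hv
      rw [map_add]
      exact U'.add_mem (hx v hv) (hy v hv)
  rcases hirr U' hinv with h | h
  · left
    ext v
    simpa [U'] using SetLike.ext_iff.mp h v
  · right
    ext v
    simpa [U'] using SetLike.ext_iff.mp h v
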